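/- Suppose the stronger condition holds for (ρ,ψ) with C(ρ,ψ) = ∫ Φ(1-Φ)/ψ < ∞. Then for every f in the ANOVA space 𝒲 (i.e., f ∈ L¹_ρ with f' ∈ L²_ψ and ‖f‖_𝒲 < ∞), ∫_{-∞}^∞ |f(x)|² ρ(x) dx ≤ (1 + γ C(ρ,ψ)) ‖f‖²_𝒲, where ‖f‖²_𝒲 = |∫ f ρ|² + (1/γ)∫|f'|²ψ. -/

import Mathlib

open MeasureTheory Real Set

private lemma amgm_aux {a w p : ℝ} (hp : 0 < p) (hw0 : 0 ≤ w) (hw1 : w ≤ 1) :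
    |a| * w ≤ a ^ 2 * p / 2 + w / p / 2 := by
  have h1 : 2 * (|a| * w) * p ≤ a ^ 2 * p ^ 2 + w := by
    nlinarith [sq_nonneg (|a| * p - w), sq_abs a, mul_nonneg hw0 (sub_nonneg.mpr hw1)]
  have h2 : |a| * w ≤ (a ^ 2 * p ^ 2 + w) / (2 * p) := by
    rw [le_div_iff₀ (by positivity)]
    linarith
  refine h2.trans (le_of_eq ?_)
  field_simp

theorem stmt13 (ρ ψ Φ : ℝ → ℝ) (γ : ℝ) (hγ : 0 < γ)
    (hρpos : ∀ x, 0 < ρ x) (hρint : Integrable ρ) (hρ1 : ∫ x, ρ x = 1)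
    (hψpos : ∀ x, 0 < ψ x)
    (hψloc : LocallyIntegrable ψ)
    (hψinvloc : LocallyIntegrable (fun x => 1 / ψ x))
    (hΦ : ∀ x, Φ x = ∫ t in Iic x, ρ t)
    (hstrong : ∀ c : ℝ, IntegrableOn (fun t => Φ t / ψ t) (Iic c) ∧
        IntegrableOn (fun t => (1 - Φ t) / ψ t) (Ici c))
    (hC : Integrable (fun t => Φ t * (1 - Φ t) / ψ t))
    (f f' : ℝ → ℝ)
    (hf'loc : LocallyIntegrable f')
    (hAC : ∀ a b : ℝ, f b - f a = ∫ t in a..b, f' t)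
    (hfL1 : Integrable (fun x => |f x| * ρ x))
    (hf'L2 : Integrable (fun x => f' x ^ 2 * ψ x)) :
    (∫⁻ x, ENNReal.ofReal (f x ^ 2 * ρ x)) ≤
      ENNReal.ofReal ((1 + γ * ∫ t, Φ t * (1 - Φ t) / ψ t) *
        ((∫ x, f x * ρ x) ^ 2 + (1 / γ) * ∫ x, f' x ^ 2 * ψ x)) := by
  classical
  set m := ∫ x, f x * ρ x with hmdef
  set A := ∫ x, f' x ^ 2 * ψ x with hAdef
  set C := ∫ t, Φ t * (1 - Φ t) / ψ t with hCdef
  have hρnn : ∀ x, (0:ℝ) ≤ ρ x := fun x => (hρpos x).le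
  have hρm : AEMeasurable ρ := hρint.aemeasurable
  have hψm : AEMeasurable ψ := hψloc.aestronglyMeasurable.aemeasurable
  have hf'm : AEMeasurable f' := hf'loc.aestronglyMeasurable.aemeasurable
  -- f is continuous
  have hfc : Continuous f := by
    have h1 : ∀ x, f x = f 0 + ∫ t in (0:ℝ)..x, f' t := by
      intro x; have := hAC 0 x; linarith
    have h2 : Continuous fun x => f 0 + ∫ t in (0:ℝ)..x, f' t := by
      refine continuous_const.add (intervalIntegral.continuous_primitive ?_ 0)
      intro a b
      rw [intervalIntegrable_iff]
      exact (hf'loc.integrableOn_isCompact isCompact_uIcc).mono_set Ioc_subset_Icc_self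
    exact h2.congr (fun x => (h1 x).symm)
  have hfm : AEMeasurable f := hfc.measurable.aemeasurable
  -- Φ facts
  have hΦmono : Monotone Φ := by
    intro a b hab
    rw [hΦ a, hΦ b]
    exact setIntegral_mono_set hρint.integrableOn (Filter.Eventually.of_forall hρnn)
      (HasSubset.Subset.eventuallyLE (Iic_subset_Iic.mpr hab))
  have hΦmeas : Measurable Φ := hΦmono.measurable
  have hΦ0 : ∀ t, 0 ≤ Φ t := fun t => by
    rw [hΦ t]; exact setIntegral_nonneg measurableSet_Iic fun y _ => hρnn y
  have hΦ1 : ∀ t, Φ t ≤ 1 := fun t => by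
    rw [hΦ t, ← hρ1]
    exact setIntegral_le_integral hρint (Filter.Eventually.of_forall hρnn)
  have hIio : ∀ t, ∫ y in Iio t, ρ y = Φ t := fun t => by
    rw [hΦ t, integral_Iic_eq_integral_Iio]
  have hIci : ∀ t, ∫ y in Ici t, ρ y = 1 - Φ t := fun t => by
    have h := integral_add_compl (measurableSet_Iic (a := t)) hρint (f := ρ)
    rw [compl_Iic, hρ1] at h
    rw [integral_Ici_eq_integral_Ioi, ← hΦ t] at *
    linarith
  have hfρ : Integrable (fun y => f y * ρ y) := by
    refine (hfL1.mono' ((hfm.mul hρm).aestronglyMeasurable) ?_)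
    refine Filter.Eventually.of_forall fun y => ?_
    rw [Real.norm_eq_abs, abs_mul, abs_of_nonneg (hρnn y)]
  have hρf : Integrable (fun y => ρ y * f y) := by
    simpa [mul_comm] using hfρ
  -- the kernel
  set K : ℝ → ℝ → ℝ := fun x t => if t ≤ x then Φ t else Φ t - 1 with hKdef
  have hKm : ∀ x, Measurable (K x) := fun x =>
    Measurable.ite measurableSet_Iic hΦmeas (hΦmeas.sub measurable_const)
  have hKabs : ∀ x t, |K x t| ≤ 1 := by
    intro x t
    rw [hKdef]; dsimp only
    split_ifs with h
    · rw [abs_of_nonneg (hΦ0 t)]; exact hΦ1 t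
    · rw [abs_of_nonpos (by linarith [hΦ1 t])]; simp; linarith [hΦ0 t]
  -- integrability of K x ^2 / ψ
  have hKint : ∀ x, Integrable (fun t => K x t ^ 2 / ψ t) := by
    intro x
    have hmeas : AEStronglyMeasurable (fun t => K x t ^ 2 / ψ t) volume :=
      (((hKm x).pow_const 2).aemeasurable.div hψm).aestronglyMeasurable
    rw [← integrableOn_univ, ← Iic_union_Ioi (a := x)]
    refine IntegrableOn.union ?_ ?_
    · refine Integrable.mono' (hstrong x).1 hmeas.restrict ?_
      refine (ae_restrict_mem measurableSet_Iic).mono fun t ht => ?_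
      have hK : K x t = Φ t := if_pos ht
      rw [Real.norm_eq_abs, abs_div, hK, abs_of_nonneg (sq_nonneg _),
        abs_of_pos (hψpos t)]
      have : Φ t ^ 2 ≤ Φ t := by nlinarith [hΦ0 t, hΦ1 t]
      exact div_le_div_of_nonneg_right this (hψpos t).le |>.trans_eq rfl
    · refine Integrable.mono' ((hstrong x).2.mono_set Ioi_subset_Ici_self) hmeas.restrict ?_
      refine (ae_restrict_mem measurableSet_Ioi).mono fun t ht => ?_
      have hK : K x t = Φ t - 1 := if_neg (not_le.mpr ht)
      rw [Real.norm_eq_abs, abs_div, hK, abs_of_nonneg (sq_nonneg _),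
        abs_of_pos (hψpos t)]
      have : (Φ t - 1) ^ 2 ≤ 1 - Φ t := by nlinarith [hΦ0 t, hΦ1 t]
      exact div_le_div_of_nonneg_right this (hψpos t).le |>.trans_eq rfl
  have hf'Ioc : ∀ a b : ℝ, IntegrableOn f' (Ioc a b) := fun a b =>
    (hf'loc.integrableOn_isCompact isCompact_Icc).mono_set Ioc_subset_Icc_self
  -- the representation formula
  have hrep : ∀ x, f x - m = ∫ t, f' t * K x t := by
    intro x
    set d : ℝ → ℝ → ℝ := fun y t =>
      (if y < t ∧ t ≤ x then (1:ℝ) else 0) - (if x < t ∧ t ≤ y then (1:ℝ) else 0) with hddef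
    have hslice : ∀ t y, ρ y * (f' t * d y t) =
        if t ≤ x then f' t * (Iio t).indicator ρ y else -f' t * (Ici t).indicator ρ y := by
      intro t y
      simp only [hddef, indicator_apply, mem_Iio, mem_Ici]
      rcases le_or_gt t x with hc | hc
      · have hB : ¬(x < t ∧ t ≤ y) := fun h => absurd hc (not_le.mpr h.1)
        rw [if_pos hc, if_neg hB]
        rcases lt_or_ge y t with hy | hy
        · rw [if_pos ⟨hy, hc⟩, if_pos hy]; ring
        · rw [if_neg (fun h => absurd h.1 (not_lt.mpr hy)), if_neg (not_lt.mpr hy)]; ring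
      · have hA : ¬(y < t ∧ t ≤ x) := fun h => absurd hc (not_lt.mpr h.2)
        rw [if_neg (not_le.mpr hc), if_neg hA]
        rcases le_or_gt t y with hy | hy
        · rw [if_pos ⟨hc, hy⟩, if_pos hy]; ring
        · rw [if_neg (fun h => absurd h.2 (not_le.mpr hy)), if_neg (not_le.mpr hy)]; ring
    have hsliceint : ∀ t, Integrable (fun y => ρ y * (f' t * d y t)) := by
      intro t
      have : (fun y => ρ y * (f' t * d y t)) =
          if t ≤ x then (fun y => f' t * (Iio t).indicator ρ y)
            else fun y => -f' t * (Ici t).indicator ρ y := by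
        funext y
        rw [hslice t y]
        split_ifs <;> rfl
      rw [this]
      split_ifs
      · exact (hρint.indicator measurableSet_Iio).const_mul _
      · exact (hρint.indicator measurableSet_Ici).const_mul _
    have hnorm : ∀ t, (∫ y, ‖ρ y * (f' t * d y t)‖) =
        |f' t| * (if t ≤ x then Φ t else 1 - Φ t) := by
      intro t
      rcases le_or_gt t x with hc | hc
      · simp only [hslice, if_pos hc]
        have : ∀ y, ‖f' t * (Iio t).indicator ρ y‖ = |f' t| * (Iio t).indicator ρ y := by
          intro y
          rw [norm_mul, Real.norm_eq_abs, Real.norm_eq_abs,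
            abs_of_nonneg (indicator_nonneg (fun y _ => hρnn y) y)]
        simp only [this]
        rw [integral_const_mul, integral_indicator measurableSet_Iio, hIio]
      · simp only [hslice, if_neg (not_le.mpr hc)]
        have : ∀ y, ‖-f' t * (Ici t).indicator ρ y‖ = |f' t| * (Ici t).indicator ρ y := by
          intro y
          rw [norm_mul, Real.norm_eq_abs, Real.norm_eq_abs, abs_neg,
            abs_of_nonneg (indicator_nonneg (fun y _ => hρnn y) y)]
        simp only [this]
        rw [integral_const_mul, integral_indicator measurableSet_Ici, hIci]
    have hWint : Integrable (fun t => |f' t| * (if t ≤ x then Φ t else 1 - Φ t)) := by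
      have hWm : Measurable (fun t => if t ≤ x then Φ t else 1 - Φ t) :=
        Measurable.ite measurableSet_Iic hΦmeas (measurable_const.sub hΦmeas)
      have hW0 : ∀ t, 0 ≤ (if t ≤ x then Φ t else 1 - Φ t) := by
        intro t; split_ifs
        · exact hΦ0 t
        · linarith [hΦ1 t]
      have hW1 : ∀ t, (if t ≤ x then Φ t else 1 - Φ t) ≤ 1 := by
        intro t; split_ifs
        · exact hΦ1 t
        · linarith [hΦ0 t]
      have hquot : Integrable (fun t => (if t ≤ x then Φ t else 1 - Φ t) / ψ t) := by
        have hmeas : AEStronglyMeasurable (fun t => (if t ≤ x then Φ t else 1 - Φ t) / ψ t)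
            volume := (hWm.aemeasurable.div hψm).aestronglyMeasurable
        rw [← integrableOn_univ, ← Iic_union_Ioi (a := x)]
        refine IntegrableOn.union ?_ ?_
        · refine Integrable.mono' (hstrong x).1 hmeas.restrict ?_
          refine (ae_restrict_mem measurableSet_Iic).mono fun t ht => ?_
          rw [if_pos (mem_Iic.mp ht), Real.norm_eq_abs, abs_div, abs_of_nonneg (hΦ0 t),
            abs_of_pos (hψpos t)]
        · refine Integrable.mono' ((hstrong x).2.mono_set Ioi_subset_Ici_self) hmeas.restrict ?_
          refine (ae_restrict_mem measurableSet_Ioi).mono fun t ht => ?_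
          rw [if_neg (not_le.mpr (mem_Ioi.mp ht)), Real.norm_eq_abs, abs_div,
            abs_of_nonneg (by linarith [hΦ1 t]), abs_of_pos (hψpos t)]
      refine Integrable.mono' ((hf'L2.div_const 2).add (hquot.div_const 2))
        (((continuous_abs.measurable.comp_aemeasurable hf'm).mul hWm.aemeasurable).aestronglyMeasurable) ?_
      refine Filter.Eventually.of_forall fun t => ?_
      rw [Real.norm_eq_abs, abs_mul, abs_abs, abs_of_nonneg (hW0 t)]
      exact amgm_aux (hψpos t) (hW0 t) (hW1 t)
    have hdm2 : Measurable fun p : ℝ × ℝ => d p.1 p.2 := by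
      simp only [hddef]
      refine Measurable.sub ?_ ?_
      · refine Measurable.ite ?_ measurable_const measurable_const
        rw [show {p : ℝ × ℝ | p.1 < p.2 ∧ p.2 ≤ x} =
          {p : ℝ × ℝ | p.1 < p.2} ∩ {p : ℝ × ℝ | p.2 ≤ x} from rfl]
        exact (measurableSet_lt measurable_fst measurable_snd).inter
          (measurableSet_le measurable_snd measurable_const)
      · refine Measurable.ite ?_ measurable_const measurable_const
        rw [show {p : ℝ × ℝ | x < p.2 ∧ p.2 ≤ p.1} =
          {p : ℝ × ℝ | x < p.2} ∩ {p : ℝ × ℝ | p.2 ≤ p.1} from rfl]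
        exact (measurableSet_lt measurable_const measurable_snd).inter
          (measurableSet_le measurable_snd measurable_fst)
    have hFm : AEStronglyMeasurable (Function.uncurry fun y t => ρ y * (f' t * d y t))
        (volume.prod volume) :=
      (hρm.comp_fst.mul (hf'm.comp_snd.mul hdm2.aemeasurable)).aestronglyMeasurable
    have hFint : Integrable (Function.uncurry fun y t => ρ y * (f' t * d y t))
        (volume.prod volume) := by
      rw [integrable_prod_iff' hFm]
      constructor
      · exact Filter.Eventually.of_forall hsliceint
      · refine hWint.congr (Filter.Eventually.of_forall fun t => ?_)
        exact (hnorm t).symm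
    have hswap := integral_integral_swap (f := fun y t => ρ y * (f' t * d y t)) hFint
    have hinner : ∀ y, (∫ t, ρ y * (f' t * d y t)) = ρ y * (f x - f y) := by
      intro y
      rw [integral_const_mul]
      congr 1
      have e1 : ∀ t, f' t * d y t =
          (Ioc y x).indicator f' t - (Ioc x y).indicator f' t := by
        intro t
        simp only [hddef, indicator_apply, mem_Ioc]
        split_ifs <;> ring
      calc (∫ t, f' t * d y t)
          = ∫ t, ((Ioc y x).indicator f' t - (Ioc x y).indicator f' t) := by
            simp only [e1]
        _ = (∫ t, (Ioc y x).indicator f' t) - ∫ t, (Ioc x y).indicator f' t :=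
            integral_sub ((integrable_indicator_iff measurableSet_Ioc).mpr (hf'Ioc y x))
              ((integrable_indicator_iff measurableSet_Ioc).mpr (hf'Ioc x y))
        _ = (∫ t in Ioc y x, f' t) - ∫ t in Ioc x y, f' t := by
            rw [integral_indicator measurableSet_Ioc, integral_indicator measurableSet_Ioc]
        _ = ∫ t in y..x, f' t := rfl
        _ = f x - f y := (hAC y x).symm
    have hL : (∫ y, ∫ t, ρ y * (f' t * d y t)) = f x - m := by
      simp only [hinner]
      have : (fun y => ρ y * (f x - f y)) = fun y => ρ y * f x - ρ y * f y := by
        funext y; ring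
      rw [this, integral_sub (hρint.mul_const _) hρf, integral_mul_const, hρ1, one_mul]
      congr 1
      rw [hmdef]
      exact integral_congr_ae (Filter.Eventually.of_forall fun y => mul_comm (ρ y) (f y))
    have hR : (∫ t, ∫ y, ρ y * (f' t * d y t)) = ∫ t, f' t * K x t := by
      congr 1; funext t
      rcases le_or_gt t x with hc | hc
      · simp only [hslice, if_pos hc]
        rw [integral_const_mul, integral_indicator measurableSet_Iio, hIio]
        rw [hKdef]; simp only [if_pos hc]
      · simp only [hslice, if_neg (not_le.mpr hc)]
        rw [integral_const_mul, integral_indicator measurableSet_Ici, hIci]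
        rw [hKdef]; simp only [if_neg (not_le.mpr hc)]; ring
    rw [← hL, hswap, hR]
  set G : ℝ → ℝ := fun x => ∫ t, K x t ^ 2 / ψ t with hGdef
  have hG0 : ∀ x, 0 ≤ G x := fun x =>
    integral_nonneg fun t => div_nonneg (sq_nonneg _) (hψpos t).le
  have hA0 : 0 ≤ A := integral_nonneg fun t => mul_nonneg (sq_nonneg _) (hψpos t).le
  have hC0 : 0 ≤ C := integral_nonneg fun t =>
    div_nonneg (mul_nonneg (hΦ0 t) (by linarith [hΦ1 t])) (hψpos t).le
  -- Cauchy-Schwarz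
  have hCS : ∀ x, (f x - m) ^ 2 ≤ A * G x := by
    intro x
    have hconj : Real.HolderConjugate 2 2 := by
      exact Real.HolderConjugate.two_two
    set u : ℝ → ℝ := fun t => |f' t| * Real.sqrt (ψ t) with hudef
    set v : ℝ → ℝ := fun t => |K x t| / Real.sqrt (ψ t) with hvdef
    have hum : AEStronglyMeasurable u volume :=
      ((continuous_abs.measurable.comp_aemeasurable hf'm).mul
        (continuous_sqrt.measurable.comp_aemeasurable hψm)).aestronglyMeasurable
    have hvm : AEStronglyMeasurable v volume :=
      (((hKm x).abs.aemeasurable).div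
        (continuous_sqrt.measurable.comp_aemeasurable hψm)).aestronglyMeasurable
    have hu2 : ∀ t, u t ^ 2 = f' t ^ 2 * ψ t := by
      intro t
      rw [hudef]; dsimp only
      rw [mul_pow, sq_abs, Real.sq_sqrt (hψpos t).le]
    have hv2 : ∀ t, v t ^ 2 = K x t ^ 2 / ψ t := by
      intro t
      rw [hvdef]; dsimp only
      rw [div_pow, sq_abs, Real.sq_sqrt (hψpos t).le]
    have huL2 : MemLp u (ENNReal.ofReal 2) volume := by
      rw [show ENNReal.ofReal 2 = 2 by norm_num]
      refine (memLp_two_iff_integrable_sq hum).mpr ?_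
      exact hf'L2.congr (Filter.Eventually.of_forall fun t => (hu2 t).symm)
    have hvL2 : MemLp v (ENNReal.ofReal 2) volume := by
      rw [show ENNReal.ofReal 2 = 2 by norm_num]
      refine (memLp_two_iff_integrable_sq hvm).mpr ?_
      exact (hKint x).congr (Filter.Eventually.of_forall fun t => (hv2 t).symm)
    have hCS0 := integral_mul_le_Lp_mul_Lq_of_nonneg hconj
      (Filter.Eventually.of_forall fun t => mul_nonneg (abs_nonneg _) (Real.sqrt_nonneg _))
      (Filter.Eventually.of_forall fun t => div_nonneg (abs_nonneg _) (Real.sqrt_nonneg _))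
      huL2 hvL2
    have huv : ∀ t, u t * v t = |f' t * K x t| := by
      intro t
      rw [hudef, hvdef]; dsimp only
      rw [abs_mul]
      have hs : Real.sqrt (ψ t) ≠ 0 :=
        ne_of_gt (Real.sqrt_pos.mpr (hψpos t))
      field_simp
    have h1 : |∫ t, f' t * K x t| ≤ ∫ t, u t * v t := by
      simp only [huv, abs_mul]
      simpa [Real.norm_eq_abs, abs_mul] using
        norm_integral_le_integral_norm (μ := volume) (fun t => f' t * K x t)
    -- square both sides
    have h2 : (∫ t, u t * v t) ≤ Real.sqrt A * Real.sqrt (G x) := by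
      have e2 : (∫ t, u t ^ (2:ℝ)) = A := by
        rw [hAdef]
        refine integral_congr_ae (Filter.Eventually.of_forall fun t => ?_)
        have h4 : u t ^ (2:ℝ) = u t ^ (2:ℕ) := by
          rw [← Real.rpow_natCast (u t) 2]; norm_num
        simp only [h4, hu2 t]
      have e3 : (∫ t, v t ^ (2:ℝ)) = G x := by
        rw [hGdef]
        refine integral_congr_ae (Filter.Eventually.of_forall fun t => ?_)
        have h4 : v t ^ (2:ℝ) = v t ^ (2:ℕ) := by
          rw [← Real.rpow_natCast (v t) 2]; norm_num
        simp only [h4, hv2 t]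
      calc (∫ t, u t * v t) ≤ (∫ t, u t ^ (2:ℝ)) ^ ((1:ℝ)/2) * (∫ t, v t ^ (2:ℝ)) ^ ((1:ℝ)/2) :=
            hCS0
        _ = Real.sqrt A * Real.sqrt (G x) := by
            rw [e2, e3, ← Real.sqrt_eq_rpow, ← Real.sqrt_eq_rpow]
    have h3 : |f x - m| ≤ Real.sqrt A * Real.sqrt (G x) := by
      rw [hrep x]
      exact h1.trans h2
    calc (f x - m) ^ 2 = |f x - m| ^ 2 := (sq_abs _).symm
      _ ≤ (Real.sqrt A * Real.sqrt (G x)) ^ 2 := by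
          exact pow_le_pow_left₀ (abs_nonneg _) h3 2
      _ = A * G x := by
          rw [mul_pow, Real.sq_sqrt hA0, Real.sq_sqrt (hG0 x)]
  -- Tonelli computation: ∫⁻ G ρ = C
  have hKpm : Measurable fun p : ℝ × ℝ => K p.1 p.2 := by
    rw [hKdef]
    exact Measurable.ite (measurableSet_le measurable_snd measurable_fst)
      (hΦmeas.comp measurable_snd) ((hΦmeas.comp measurable_snd).sub measurable_const)
  have hGl : ∀ x, ENNReal.ofReal (G x * ρ x) =
      ∫⁻ t, ENNReal.ofReal (ρ x) * ENNReal.ofReal (K x t ^ 2 / ψ t) := by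
    intro x
    rw [mul_comm (G x) (ρ x), ENNReal.ofReal_mul (hρnn x), hGdef]
    dsimp only
    rw [ofReal_integral_eq_lintegral_ofReal (hKint x)
        (Filter.Eventually.of_forall fun t => div_nonneg (sq_nonneg _) (hψpos t).le),
      ← lintegral_const_mul' _ _ ENNReal.ofReal_ne_top]
  have hinner2 : ∀ t, (∫⁻ x, ENNReal.ofReal (ρ x) * ENNReal.ofReal (K x t ^ 2 / ψ t)) =
      ENNReal.ofReal (Φ t * (1 - Φ t) / ψ t) := by
    intro t
    rw [← lintegral_add_compl _ (measurableSet_Ici (a := t)), compl_Ici]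
    have e1 : (∫⁻ x in Ici t, ENNReal.ofReal (ρ x) * ENNReal.ofReal (K x t ^ 2 / ψ t))
        = ENNReal.ofReal (1 - Φ t) * ENNReal.ofReal (Φ t ^ 2 / ψ t) := by
      have congr1 : ∀ᵐ x ∂volume, x ∈ Ici t →
          ENNReal.ofReal (ρ x) * ENNReal.ofReal (K x t ^ 2 / ψ t) =
          ENNReal.ofReal (ρ x) * ENNReal.ofReal (Φ t ^ 2 / ψ t) := by
        refine Filter.Eventually.of_forall fun x hx => ?_
        have hk : K x t = Φ t := if_pos (mem_Ici.mp hx)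
        rw [hk]
      rw [setLIntegral_congr_fun_ae measurableSet_Ici congr1,
        lintegral_mul_const' _ _ ENNReal.ofReal_ne_top,
        ← ofReal_integral_eq_lintegral_ofReal hρint.integrableOn
          (Filter.Eventually.of_forall fun y => hρnn y), hIci t]
    have e2 : (∫⁻ x in Iio t, ENNReal.ofReal (ρ x) * ENNReal.ofReal (K x t ^ 2 / ψ t))
        = ENNReal.ofReal (Φ t) * ENNReal.ofReal ((Φ t - 1) ^ 2 / ψ t) := by
      have congr2 : ∀ᵐ x ∂volume, x ∈ Iio t →
          ENNReal.ofReal (ρ x) * ENNReal.ofReal (K x t ^ 2 / ψ t) =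
          ENNReal.ofReal (ρ x) * ENNReal.ofReal ((Φ t - 1) ^ 2 / ψ t) := by
        refine Filter.Eventually.of_forall fun x hx => ?_
        have hk : K x t = Φ t - 1 := if_neg (not_le.mpr (mem_Iio.mp hx))
        rw [hk]
      rw [setLIntegral_congr_fun_ae measurableSet_Iio congr2,
        lintegral_mul_const' _ _ ENNReal.ofReal_ne_top,
        ← ofReal_integral_eq_lintegral_ofReal hρint.integrableOn
          (Filter.Eventually.of_forall fun y => hρnn y), hIio t]
    rw [e1, e2, ← ENNReal.ofReal_mul (by linarith [hΦ1 t]),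
      ← ENNReal.ofReal_mul (hΦ0 t), ← ENNReal.ofReal_add
        (mul_nonneg (by linarith [hΦ1 t]) (div_nonneg (sq_nonneg _) (hψpos t).le))
        (mul_nonneg (hΦ0 t) (div_nonneg (sq_nonneg _) (hψpos t).le))]
    congr 1
    have hψne : ψ t ≠ 0 := ne_of_gt (hψpos t)
    field_simp
    ring
  have hGC : (∫⁻ x, ENNReal.ofReal (G x * ρ x)) = ENNReal.ofReal C := by
    have hswap2 : (∫⁻ x, ENNReal.ofReal (G x * ρ x)) =
        ∫⁻ t, ∫⁻ x, ENNReal.ofReal (ρ x) * ENNReal.ofReal (K x t ^ 2 / ψ t) := by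
      simp only [hGl]
      refine lintegral_lintegral_swap ?_
      exact (ENNReal.measurable_ofReal.comp_aemeasurable hρm.comp_fst).mul
        (ENNReal.measurable_ofReal.comp_aemeasurable
          (((hKpm.pow_const 2).aemeasurable).div hψm.comp_snd))
    rw [hswap2]
    simp only [hinner2]
    rw [← ofReal_integral_eq_lintegral_ofReal hC (Filter.Eventually.of_forall fun t =>
      div_nonneg (mul_nonneg (hΦ0 t) (by linarith [hΦ1 t])) (hψpos t).le)]
  -- assembling
  have hgmeas : AEMeasurable (fun x => (f x - m) ^ 2 * ρ x) :=
    ((hfm.sub aemeasurable_const).pow_const 2).mul hρm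
  have hgbound : (∫⁻ x, ENNReal.ofReal ((f x - m) ^ 2 * ρ x)) ≤ ENNReal.ofReal (A * C) := by
    calc (∫⁻ x, ENNReal.ofReal ((f x - m) ^ 2 * ρ x))
        ≤ ∫⁻ x, ENNReal.ofReal (A * (G x * ρ x)) := by
          refine lintegral_mono fun x => ENNReal.ofReal_le_ofReal ?_
          rw [← mul_assoc]
          exact mul_le_mul_of_nonneg_right (hCS x) (hρnn x)
      _ = ENNReal.ofReal A * ∫⁻ x, ENNReal.ofReal (G x * ρ x) := by
          simp_rw [ENNReal.ofReal_mul hA0]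
          rw [lintegral_const_mul' _ _ ENNReal.ofReal_ne_top]
      _ = ENNReal.ofReal A * ENNReal.ofReal C := by rw [hGC]
      _ = ENNReal.ofReal (A * C) := (ENNReal.ofReal_mul hA0).symm
  have hgnn : 0 ≤ᵐ[volume] fun x => (f x - m) ^ 2 * ρ x :=
    Filter.Eventually.of_forall fun x => mul_nonneg (sq_nonneg _) (hρnn x)
  have hgint : Integrable (fun x => (f x - m) ^ 2 * ρ x) := by
    refine ⟨hgmeas.aestronglyMeasurable, ?_⟩
    rw [hasFiniteIntegral_iff_ofReal hgnn]
    exact lt_of_le_of_lt hgbound ENNReal.ofReal_lt_top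
  have hgle : (∫ x, (f x - m) ^ 2 * ρ x) ≤ A * C := by
    have h2 : ENNReal.ofReal (∫ x, (f x - m) ^ 2 * ρ x) ≤ ENNReal.ofReal (A * C) :=
      (ofReal_integral_eq_lintegral_ofReal hgint hgnn) ▸ hgbound
    exact (ENNReal.ofReal_le_ofReal_iff (mul_nonneg hA0 hC0)).mp h2
  have hf2int : Integrable (fun x => f x ^ 2 * ρ x) := by
    have e : (fun x => f x ^ 2 * ρ x) =
        fun x => ((f x - m) ^ 2 * ρ x + (2 * m) * (f x * ρ x)) - m ^ 2 * ρ x := by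
      funext x; ring
    rw [e]
    exact (hgint.add (hfρ.const_mul _)).sub (hρint.const_mul _)
  have hsplit : (∫ x, f x ^ 2 * ρ x) = (∫ x, (f x - m) ^ 2 * ρ x) + m ^ 2 := by
    have e : (fun x => f x ^ 2 * ρ x) =
        fun x => ((f x - m) ^ 2 * ρ x + (2 * m) * (f x * ρ x)) - m ^ 2 * ρ x := by
      funext x; ring
    have h1 : ∫ x, (((f x - m) ^ 2 * ρ x + (2 * m) * (f x * ρ x)) - m ^ 2 * ρ x) =
        (∫ x, ((f x - m) ^ 2 * ρ x + (2 * m) * (f x * ρ x))) - ∫ x, m ^ 2 * ρ x :=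
      integral_sub (hgint.add (hfρ.const_mul _)) (hρint.const_mul _)
    have h2 : (∫ x, ((f x - m) ^ 2 * ρ x + (2 * m) * (f x * ρ x))) =
        (∫ x, (f x - m) ^ 2 * ρ x) + ∫ x, (2 * m) * (f x * ρ x) :=
      integral_add hgint (hfρ.const_mul _)
    rw [e, h1, h2, integral_const_mul, integral_const_mul, hρ1, ← hmdef]
    ring
  have hfinal : (∫ x, f x ^ 2 * ρ x) ≤ (1 + γ * C) * (m ^ 2 + (1 / γ) * A) := by
    rw [hsplit]
    have expand : (1 + γ * C) * (m ^ 2 + (1 / γ) * A) =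
        m ^ 2 + (1 / γ) * A + γ * C * m ^ 2 + A * C := by
      field_simp
      ring
    rw [expand]
    have h1 : 0 ≤ (1 / γ) * A := mul_nonneg (by positivity) hA0
    have h2 : 0 ≤ γ * C * m ^ 2 := mul_nonneg (mul_nonneg hγ.le hC0) (sq_nonneg m)
    linarith [hgle]
  calc (∫⁻ x, ENNReal.ofReal (f x ^ 2 * ρ x))
      = ENNReal.ofReal (∫ x, f x ^ 2 * ρ x) :=
        (ofReal_integral_eq_lintegral_ofReal hf2int
          (Filter.Eventually.of_forall fun x => mul_nonneg (sq_nonneg _) (hρnn x))).symm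
    _ ≤ ENNReal.ofReal ((1 + γ * C) * (m ^ 2 + (1 / γ) * A)) :=
        ENNReal.ofReal_le_ofReal hfinal
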